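/- Suppose Assumptions TI and CONT hold, but instead of strict monotonicity assume only that μ₀₀ and μ₁₁ are nondecreasing on ℝ (weak monotonicity, allowing discrete outcomes). With the conventions inf ∅ := +∞ and F_{X|A}(+∞) := 1, the following upper bound holds for every y ∈ ℝ: F_{Y₁(1)|G=0,R=1}(y) ≤ F_{Y₀|G=0,R=1}(F_{Y₀|G=1,R=1}^{-1}(F_{Y₁|G=1,R=1}(y))). (Upper-bound half of Remark 2 for the counterfactual treated outcome of control respondents.) -/

import Mathlib

open MeasureTheory ProbabilityTheory

/-- Conditional CDF of `X` given the event `A`: `F_{X|A}(y) = P(X ≤ y | A)`. -/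
noncomputable def cCDF {Ω : Type*} [MeasurableSpace Ω] (P : Measure Ω) (A : Set Ω)
    (X : Ω → ℝ) (y : ℝ) : ℝ :=
  ((P[|A]) {ω | X ω ≤ y}).toReal

/-- Generalized inverse `F⁻¹(q) = inf {y ∈ ℝ : F(y) ≥ q}`. -/
noncomputable def ginv (F : ℝ → ℝ) (q : ℝ) : ℝ :=
  sInf {y : ℝ | q ≤ F y}

/-- Conditional expectation of `X` given the event `A`: `E[X·1_A]/P(A)`. -/
noncomputable def cExp {Ω : Type*} [MeasurableSpace Ω] (P : Measure Ω) (A : Set Ω)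
    (X : Ω → ℝ) : ℝ :=
  (∫ ω in A, X ω ∂P) / (P A).toReal

/-- Conditional probability of `B` given `A`: `P(B|A) = P(B ∩ A)/P(A)`. -/
noncomputable def condProb {Ω : Type*} [MeasurableSpace Ω] (P : Measure Ω)
    (A B : Set Ω) : ℝ :=
  (P (B ∩ A)).toReal / (P A).toReal

/-- Generalized inverse valued in `EReal`, with the convention `inf ∅ = +∞`
(and `inf S = -∞` when `S` is nonempty but unbounded below). -/
noncomputable def ginvE (F : ℝ → ℝ) (q : ℝ) : EReal :=
  sInf {z : EReal | ∃ x : ℝ, z = (x : EReal) ∧ q ≤ F x}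

/-- Conditional CDF extended to `EReal` arguments, with the conventions
`F_{X|A}(+∞) = 1` and `F_{X|A}(-∞) = 0`. -/
noncomputable def cCDFE {Ω : Type*} [MeasurableSpace Ω] (P : Measure Ω) (A : Set Ω)
    (X : Ω → ℝ) (y : EReal) : ℝ :=
  if y = ⊤ then 1 else if y = ⊥ then 0 else cCDF P A X y.toReal

section CicCore
open Set Filter Topology

lemma cic_seq_tendsto (a : ℝ) : Filter.Tendsto (fun n : ℕ => a - 1/(n+1)) atTop (nhds a) := by
  have h : Tendsto (fun n : ℕ => 1 / ((n : ℝ) + 1)) atTop (nhds 0) := tendsto_one_div_add_atTop_nhds_zero_nat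
  simpa using tendsto_const_nhds.sub h

lemma cic_core (ν₀ ν₁ : Measure ℝ) [IsProbabilityMeasure ν₀] [IsProbabilityMeasure ν₁]
    (hc : Continuous fun u => (ν₀ (Set.Iic u)).toReal)
    (hs : StrictMono fun u => (ν₁ (Set.Iic u)).toReal)
    {S T : Set ℝ} (hS : IsLowerSet S) (hT : IsLowerSet T)
    (h : (ν₁ S).toReal ≤ (ν₁ T).toReal) :
    (ν₀ S).toReal ≤ (ν₀ T).toReal := by
  have mono0 : ∀ {s t : Set ℝ}, s ⊆ t → (ν₀ s).toReal ≤ (ν₀ t).toReal :=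
    fun hst => ENNReal.toReal_mono (measure_ne_top _ _) (measure_mono hst)
  have mono1 : ∀ {s t : Set ℝ}, s ⊆ t → (ν₁ s).toReal ≤ (ν₁ t).toReal :=
    fun hst => ENNReal.toReal_mono (measure_ne_top _ _) (measure_mono hst)
  have hseq : ∀ a : ℝ, Tendsto (fun n : ℕ => (ν₀ (Iic (a - 1/(n+1)))).toReal) atTop
      (nhds ((ν₀ (Iic a)).toReal)) := fun a => (hc.tendsto a).comp (cic_seq_tendsto a)
  -- per-point bound
  have hpt : ∀ u ∈ S, (ν₀ (Iic u)).toReal ≤ (ν₀ T).toReal := by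
    intro u huS
    by_cases huT : u ∈ T
    · exact mono0 (fun x hx => hT hx huT)
    · have hTu : T ⊆ Iio u := by
        intro x hx
        by_contra hlt
        exact huT (hT (not_lt.mp hlt) hx)
      have e1 : (ν₁ (Iic u)).toReal ≤ (ν₁ S).toReal := mono1 (fun x hx => hS hx huS)
      have e2 : (ν₁ T).toReal ≤ (ν₁ (Iio u)).toReal := mono1 hTu
      have e3 : (ν₁ (Iio u)).toReal ≤ (ν₁ (Iic u)).toReal := mono1 Iio_subset_Iic_self
      have hTeq : T = Iio u := by
        refine Subset.antisymm hTu ?_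
        intro v hv
        by_contra hvT
        have hvu : v < u := hv
        have hTv : T ⊆ Iio v := by
          intro x hx
          by_contra hlt
          exact hvT (hT (not_lt.mp hlt) hx)
        have h4 : (ν₁ T).toReal ≤ (ν₁ (Iic v)).toReal :=
          mono1 (hTv.trans Iio_subset_Iic_self)
        have h5 : (ν₁ (Iic v)).toReal < (ν₁ (Iic ((v+u)/2))).toReal := hs (by linarith)
        have h6 : (ν₁ (Iic ((v+u)/2))).toReal ≤ (ν₁ (Iio u)).toReal := by
          apply mono1
          intro x hx
          simp only [mem_Iic] at hx
          simp only [mem_Iio]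
          linarith
        linarith
      -- atom of ν₀ at u is zero
      have hatom : (ν₀ {u}).toReal = 0 := by
        have hb : ∀ v, v < u → (ν₀ {u}).toReal ≤ (ν₀ (Iic u)).toReal - (ν₀ (Iic v)).toReal := by
          intro v hv
          have hdisj : Disjoint (Iic v) {u} := by
            simp [disjoint_singleton_right, hv.not_ge]
          have hsub : Iic v ∪ {u} ⊆ Iic u := by
            apply union_subset (Iic_subset_Iic.mpr hv.le)
            simp
          have hu : ν₀ (Iic v ∪ {u}) = ν₀ (Iic v) + ν₀ {u} :=
            measure_union hdisj (measurableSet_singleton u)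
          have hle : ν₀ (Iic v) + ν₀ {u} ≤ ν₀ (Iic u) := hu ▸ measure_mono hsub
          have hle' : (ν₀ (Iic v)).toReal + (ν₀ {u}).toReal ≤ (ν₀ (Iic u)).toReal := by
            rw [← ENNReal.toReal_add (measure_ne_top _ _) (measure_ne_top _ _)]
            exact ENNReal.toReal_mono (measure_ne_top _ _) hle
          linarith
        have htnd : Tendsto (fun n : ℕ => (ν₀ (Iic u)).toReal - (ν₀ (Iic (u - 1/(n+1)))).toReal)
            atTop (nhds 0) := by
          have h0 := Filter.Tendsto.sub (tendsto_const_nhds (x := (ν₀ (Iic u)).toReal)) (hseq u)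
          simpa using h0
        have hge : ∀ n : ℕ, (ν₀ {u}).toReal ≤
            (ν₀ (Iic u)).toReal - (ν₀ (Iic (u - 1/(n+1)))).toReal := by
          intro n
          apply hb
          have : (0:ℝ) < 1/(n+1) := by positivity
          linarith
        have := ge_of_tendsto' htnd hge
        exact le_antisymm this ENNReal.toReal_nonneg
      have hfin : (ν₀ (Iic u)).toReal ≤ (ν₀ (Iio u)).toReal := by
        have hun : Iio u ∪ {u} = Iic u := Iio_union_right
        have hdisj : Disjoint (Iio u) {u} := by simp
        have hmu : ν₀ (Iio u ∪ {u}) = ν₀ (Iio u) + ν₀ {u} :=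
          measure_union hdisj (measurableSet_singleton u)
        rw [hun] at hmu
        calc (ν₀ (Iic u)).toReal = (ν₀ (Iio u)).toReal + (ν₀ {u}).toReal := by
              rw [hmu, ENNReal.toReal_add (measure_ne_top _ _) (measure_ne_top _ _)]
          _ ≤ (ν₀ (Iio u)).toReal := by rw [hatom, add_zero]
      rw [hTeq]
      exact hfin
  -- conclude
  by_cases hne : S.Nonempty
  · by_cases hbd : BddAbove S
    · set c := sSup S with hc'
      have hSc : S ⊆ Iic c := fun x hx => le_csSup hbd hx
      by_cases hcS : c ∈ S
      · exact le_trans (mono0 hSc) (hpt c hcS)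
      · have hIio : ∀ v, v < c → v ∈ S := by
          intro v hv
          obtain ⟨x, hxS, hvx⟩ := exists_lt_of_lt_csSup hne hv
          exact hS hvx.le hxS
        have hle : ∀ n : ℕ, (ν₀ (Iic (c - 1/(n+1)))).toReal ≤ (ν₀ T).toReal := by
          intro n
          apply hpt
          apply hIio
          have : (0:ℝ) < 1/(n+1) := by positivity
          linarith
        have := le_of_tendsto (hseq c) (Filter.Eventually.of_forall hle)
        exact (mono0 hSc).trans this
    · have hSuniv : S = univ := by
        apply eq_univ_of_forall
        intro v
        obtain ⟨x, hxS, hvx⟩ := not_bddAbove_iff.mp hbd v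
        exact hS hvx.le hxS
      have hU : ⋃ n : ℕ, Iic ((n:ℝ)) = univ := by
        ext x
        simp only [mem_iUnion, mem_Iic, mem_univ, iff_true]
        obtain ⟨n, hn⟩ := exists_nat_ge x
        exact ⟨n, hn⟩
      have htnd : Tendsto (fun n : ℕ => ν₀ (Iic (n:ℝ))) atTop (nhds (ν₀ (⋃ n : ℕ, Iic (n:ℝ)))) :=
        tendsto_measure_iUnion_atTop (fun a b hab => Iic_subset_Iic.mpr (by exact_mod_cast hab))
      have htnd' : Tendsto (fun n : ℕ => (ν₀ (Iic (n:ℝ))).toReal) atTop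
          (nhds ((ν₀ (⋃ n : ℕ, Iic (n:ℝ))).toReal)) :=
        (ENNReal.tendsto_toReal (measure_ne_top _ _)).comp htnd
      have hle : ∀ n : ℕ, (ν₀ (Iic (n:ℝ))).toReal ≤ (ν₀ T).toReal := by
        intro n
        exact hpt _ (hSuniv ▸ mem_univ _)
      have := le_of_tendsto htnd' (Filter.Eventually.of_forall hle)
      rw [hU] at this
      rw [hSuniv]
      exact this
  · rw [not_nonempty_iff_eq_empty.mp hne]
    simp only [measure_empty, ENNReal.toReal_zero]
    exact ENNReal.toReal_nonneg

end CicCore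

/-- **Remark 2 (upper bound, counterfactual treated outcome of control respondents)**:
under Assumptions TI and CONT, with `μ₀₀` and `μ₁₁` only nondecreasing (weak monotonicity,
allowing discrete outcomes), for every `y ∈ ℝ`,
`F_{Y₁(1)|G=0,R=1}(y) ≤ F_{Y₀|G=0,R=1}(F_{Y₀|G=1,R=1}⁻¹(F_{Y₁|G=1,R=1}(y)))`,
with the conventions `inf ∅ = +∞` and `F(+∞) = 1`. -/
theorem cic_remark2_upper_treated {Ω : Type*} [MeasurableSpace Ω]
    (P : Measure Ω) [IsProbabilityMeasure P]
    (U₀ U₁ : Ω → ℝ) (G R : Ω → Bool)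
    (hU₀ : Measurable U₀) (hU₁ : Measurable U₁)
    (hG : Measurable G) (hR : Measurable R)
    (μ00 μ10 μ11 : ℝ → ℝ)
    -- observed outcomes
    (Y0 Y1 : Ω → ℝ)
    (hY0 : ∀ ω, Y0 ω = μ00 (U₀ ω))
    (hY1 : ∀ ω, Y1 ω = if G ω = true then μ11 (U₁ ω) else μ10 (U₁ ω))
    -- Assumption TI (time invariance)
    (hTI : ∀ g r : Bool, 0 < P {ω | G ω = g ∧ R ω = r} →
      (P[|{ω | G ω = g ∧ R ω = r}]).map U₀ = (P[|{ω | G ω = g ∧ R ω = r}]).map U₁)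
    -- Assumption CONT
    (hCONT : ∀ g : Bool, 0 < P {ω | G ω = g ∧ R ω = true} ∧
      Continuous (cCDF P {ω | G ω = g ∧ R ω = true} U₁) ∧
      StrictMono (cCDF P {ω | G ω = g ∧ R ω = true} U₁))
    -- weak monotonicity of μ₀₀ and μ₁₁
    (hμ00 : Monotone μ00) (hμ11 : Monotone μ11)
    (y : ℝ) :
    cCDF P {ω | G ω = false ∧ R ω = true} (fun ω => μ11 (U₁ ω)) y
      ≤ cCDFE P {ω | G ω = false ∧ R ω = true} Y0
          (ginvE (cCDF P {ω | G ω = true ∧ R ω = true} Y0)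
            (cCDF P {ω | G ω = true ∧ R ω = true} Y1 y)) := by
  classical
  obtain ⟨hP1, hcont1, hsm1⟩ := hCONT true
  obtain ⟨hP0, hcont0, hsm0⟩ := hCONT false
  set A₀ := {ω | G ω = false ∧ R ω = true} with hA₀def
  set A₁ := {ω | G ω = true ∧ R ω = true} with hA₁def
  have hmA1 : MeasurableSet A₁ := by
    rw [hA₁def]
    have h1 : {ω | G ω = true ∧ R ω = true} = G ⁻¹' {true} ∩ R ⁻¹' {true} := by
      ext ω
      simp [Set.mem_inter_iff, Set.mem_preimage, Set.mem_singleton_iff]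
    rw [h1]
    exact (hG (measurableSet_singleton true)).inter (hR (measurableSet_singleton true))
  haveI i1 : IsProbabilityMeasure (P[|A₁]) := cond_isProbabilityMeasure hP1.ne'
  haveI i0 : IsProbabilityMeasure (P[|A₀]) := cond_isProbabilityMeasure hP0.ne'
  set ν₁ := (P[|A₁]).map U₁ with hν₁
  set ν₀ := (P[|A₀]).map U₁ with hν₀
  haveI : IsProbabilityMeasure ν₁ := Measure.isProbabilityMeasure_map hU₁.aemeasurable
  haveI : IsProbabilityMeasure ν₀ := Measure.isProbabilityMeasure_map hU₁.aemeasurable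
  set S := {u : ℝ | μ11 u ≤ y} with hSdef
  have hmS : MeasurableSet S := hμ11.measurable measurableSet_Iic
  have hSlow : IsLowerSet S := fun a b hba ha => le_trans (hμ11 hba) ha
  set T : ℝ → Set ℝ := fun t => {u : ℝ | μ00 u ≤ t} with hTdef
  have hmT : ∀ t, MeasurableSet (T t) := fun t => hμ00.measurable measurableSet_Iic
  have hTlow : ∀ t, IsLowerSet (T t) := fun t a b hba ha => le_trans (hμ00 hba) ha
  have hTmono : ∀ s t : ℝ, s ≤ t → T s ⊆ T t := fun s t hst x hx => le_trans hx hst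
  have hTI1 : (P[|A₁]).map U₀ = (P[|A₁]).map U₁ := hTI true true hP1
  have hTI0 : (P[|A₀]).map U₀ = (P[|A₀]).map U₁ := hTI false true hP0
  have mono1 : ∀ {s t : Set ℝ}, s ⊆ t → (ν₁ s).toReal ≤ (ν₁ t).toReal :=
    fun hst => ENNReal.toReal_mono (measure_ne_top _ _) (measure_mono hst)
  -- identification of the various cCDFs
  have hq1 : cCDF P A₁ Y1 y = (ν₁ S).toReal := by
    have hset : A₁ ∩ {ω | Y1 ω ≤ y} = A₁ ∩ (U₁ ⁻¹' S) := by
      ext ω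
      simp only [hA₁def, Set.mem_inter_iff, Set.mem_setOf_eq, Set.mem_preimage, hSdef]
      constructor
      · rintro ⟨⟨hg, hr⟩, h2⟩
        rw [hY1 ω, if_pos hg] at h2
        exact ⟨⟨hg, hr⟩, h2⟩
      · rintro ⟨⟨hg, hr⟩, h2⟩
        exact ⟨⟨hg, hr⟩, by rw [hY1 ω, if_pos hg]; exact h2⟩
    show ((P[|A₁]) {ω | Y1 ω ≤ y}).toReal = (ν₁ S).toReal
    rw [hν₁, Measure.map_apply hU₁ hmS, cond_apply hmA1, cond_apply hmA1, hset]
  have hF1 : ∀ t, cCDF P A₁ Y0 t = (ν₁ (T t)).toReal := by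
    intro t
    have h1 : {ω | Y0 ω ≤ t} = U₀ ⁻¹' (T t) := by
      ext ω
      simp [hTdef, hY0]
    show ((P[|A₁]) {ω | Y0 ω ≤ t}).toReal = (ν₁ (T t)).toReal
    rw [h1, hν₁, ← hTI1, Measure.map_apply hU₀ (hmT t)]
  have hF0 : ∀ t, cCDF P A₀ Y0 t = (ν₀ (T t)).toReal := by
    intro t
    have h1 : {ω | Y0 ω ≤ t} = U₀ ⁻¹' (T t) := by
      ext ω
      simp [hTdef, hY0]
    show ((P[|A₀]) {ω | Y0 ω ≤ t}).toReal = (ν₀ (T t)).toReal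
    rw [h1, hν₀, ← hTI0, Measure.map_apply hU₀ (hmT t)]
  have hq0 : cCDF P A₀ (fun ω => μ11 (U₁ ω)) y = (ν₀ S).toReal := by
    show ((P[|A₀]) {ω | μ11 (U₁ ω) ≤ y}).toReal = (ν₀ S).toReal
    rw [hν₀, Measure.map_apply hU₁ hmS]
    rfl
  have hcdf1 : (fun u => (ν₁ (Set.Iic u)).toReal) = cCDF P A₁ U₁ := by
    funext u
    show (ν₁ (Set.Iic u)).toReal = ((P[|A₁]) {ω | U₁ ω ≤ u}).toReal
    rw [hν₁, Measure.map_apply hU₁ measurableSet_Iic]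
    rfl
  have hcdf0 : (fun u => (ν₀ (Set.Iic u)).toReal) = cCDF P A₀ U₁ := by
    funext u
    show (ν₀ (Set.Iic u)).toReal = ((P[|A₀]) {ω | U₁ ω ≤ u}).toReal
    rw [hν₀, Measure.map_apply hU₁ measurableSet_Iic]
    rfl
  have hsm1' : StrictMono fun u => (ν₁ (Set.Iic u)).toReal := by rw [hcdf1]; exact hsm1
  have hcont0' : Continuous fun u => (ν₀ (Set.Iic u)).toReal := by rw [hcdf0]; exact hcont0
  set F := cCDF P A₁ Y0 with hFdef
  set q := cCDF P A₁ Y1 y with hqdef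
  have hFmono : Monotone F := by
    intro a b hab
    rw [hF1, hF1]
    exact mono1 (hTmono a b hab)
  by_cases hMne : {x : ℝ | q ≤ F x}.Nonempty
  · by_cases hbd : BddBelow {x : ℝ | q ≤ F x}
    · -- main case
      set t₀ := sInf {x : ℝ | q ≤ F x} with ht₀def
      have hqFt₀ : q ≤ F t₀ := by
        have key : ∀ n : ℕ, q ≤ (ν₁ (T (t₀ + 1/(n+1)))).toReal := by
          intro n
          have hlt : t₀ < t₀ + 1/(n+1) := by
            have hp : (0:ℝ) < 1/(n+1) := by positivity
            linarith
          obtain ⟨x, hxM, hxlt⟩ := (csInf_lt_iff hbd hMne).mp hlt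
          calc q ≤ F x := hxM
            _ = (ν₁ (T x)).toReal := hF1 x
            _ ≤ _ := mono1 (hTmono _ _ hxlt.le)
        have hinter : ⋂ n : ℕ, T (t₀ + 1/(n+1)) = T t₀ := by
          apply Set.Subset.antisymm
          · intro x hx
            simp only [Set.mem_iInter] at hx
            show μ00 x ≤ t₀
            by_contra hgt
            push_neg at hgt
            obtain ⟨n, hn⟩ := exists_nat_one_div_lt (sub_pos.mpr hgt)
            have h2 : μ00 x ≤ t₀ + 1/(n+1) := hx n
            linarith
          · intro x hx
            simp only [Set.mem_iInter]
            intro n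
            have hp : (0:ℝ) ≤ 1/(n+1) := by positivity
            exact hTmono t₀ _ (by linarith) hx
        have htnd : Filter.Tendsto (fun n : ℕ => ν₁ (T (t₀ + 1/(n+1)))) Filter.atTop
            (nhds (ν₁ (T t₀))) := by
          have h1 := tendsto_measure_iInter_atTop (μ := ν₁)
            (s := fun n : ℕ => T (t₀ + 1/(n+1)))
            (fun n => (hmT _).nullMeasurableSet)
            (fun a b hab => hTmono _ _ (by
              have : (1:ℝ)/(b+1) ≤ 1/(a+1) := by
                apply one_div_le_one_div_of_le
                · positivity
                · have : (a:ℝ) ≤ b := by exact_mod_cast hab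
                  linarith
              linarith))
            ⟨0, measure_ne_top _ _⟩
          rwa [hinter] at h1
        have htnd' : Filter.Tendsto (fun n : ℕ => (ν₁ (T (t₀ + 1/(n+1)))).toReal) Filter.atTop
            (nhds ((ν₁ (T t₀)).toReal)) :=
          (ENNReal.tendsto_toReal (measure_ne_top _ _)).comp htnd
        rw [hF1]
        exact ge_of_tendsto htnd' (Filter.Eventually.of_forall key)
      have hginv : ginvE F q = (t₀ : EReal) := by
        unfold ginvE
        apply le_antisymm
        · exact sInf_le ⟨t₀, rfl, hqFt₀⟩
        · apply le_sInf
          rintro z ⟨x, rfl, hx⟩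
          exact_mod_cast csInf_le hbd hx
      rw [hginv]
      have hcE : cCDFE P A₀ Y0 ((t₀ : EReal)) = cCDF P A₀ Y0 t₀ := by
        unfold cCDFE
        rw [if_neg (EReal.coe_ne_top t₀), if_neg (EReal.coe_ne_bot t₀), EReal.toReal_coe]
      rw [hcE, hq0, hF0]
      exact cic_core ν₀ ν₁ hcont0' hsm1' hSlow (hTlow t₀)
        (by rw [← hq1, ← hF1]; exact hqFt₀)
    · -- M nonempty but unbounded below: q = 0 and S = ∅
      have hqleF : ∀ b : ℝ, q ≤ F b := by
        intro b
        obtain ⟨x, hxM, hxb⟩ := not_bddBelow_iff.mp hbd b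
        exact le_trans hxM (hFmono hxb.le)
      have hinter : ⋂ n : ℕ, T (-(n:ℝ)) = ∅ := by
        rw [Set.eq_empty_iff_forall_notMem]
        intro x hx
        simp only [Set.mem_iInter] at hx
        obtain ⟨n, hn⟩ := exists_nat_gt (-(μ00 x))
        have h2 : μ00 x ≤ -(n:ℝ) := hx n
        linarith
      have htnd : Filter.Tendsto (fun n : ℕ => (ν₁ (T (-(n:ℝ)))).toReal) Filter.atTop
          (nhds 0) := by
        have h1 := tendsto_measure_iInter_atTop (μ := ν₁)
          (s := fun n : ℕ => T (-(n:ℝ)))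
          (fun n => (hmT _).nullMeasurableSet)
          (fun a b hab => hTmono _ _ (by
            have : (a:ℝ) ≤ b := by exact_mod_cast hab
            linarith))
          ⟨0, measure_ne_top _ _⟩
        rw [hinter, measure_empty] at h1
        have h2 := (ENNReal.tendsto_toReal (by simp : (0:ENNReal) ≠ ⊤)).comp h1
        simpa [Function.comp_def] using h2
      have hqle0 : q ≤ 0 := by
        apply ge_of_tendsto htnd
        apply Filter.Eventually.of_forall
        intro n
        rw [← hF1]
        exact hqleF _
      have hνS : (ν₁ S).toReal = 0 := le_antisymm (hq1 ▸ hqle0) ENNReal.toReal_nonneg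
      have hSemp : S = ∅ := by
        rw [Set.eq_empty_iff_forall_notMem]
        intro u hu
        have h1 : (ν₁ (Set.Iic u)).toReal ≤ (ν₁ S).toReal :=
          mono1 (fun x hx => hSlow hx hu)
        have h2 : (ν₁ (Set.Iic (u-1))).toReal < (ν₁ (Set.Iic u)).toReal := hsm1' (by linarith)
        have h3 : 0 ≤ (ν₁ (Set.Iic (u-1))).toReal := ENNReal.toReal_nonneg
        rw [hνS] at h1
        linarith
      rw [hq0, hSemp]
      simp only [measure_empty, ENNReal.toReal_zero]
      unfold cCDFE
      split_ifs
      · norm_num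
      · exact le_refl 0
      · exact ENNReal.toReal_nonneg
  · -- M empty: ginvE = ⊤
    have hE : {z : EReal | ∃ x : ℝ, z = (x:EReal) ∧ q ≤ F x} = ∅ := by
      rw [Set.eq_empty_iff_forall_notMem]
      rintro z ⟨x, rfl, hx⟩
      exact hMne ⟨x, hx⟩
    have hgtop : ginvE F q = ⊤ := by
      unfold ginvE
      rw [hE, sInf_empty]
    rw [hgtop]
    have h1 : cCDFE P A₀ Y0 (⊤ : EReal) = 1 := by
      unfold cCDFE
      simp
    rw [h1, hq0]
    calc (ν₀ S).toReal ≤ (ν₀ Set.univ).toReal :=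
          ENNReal.toReal_mono (measure_ne_top _ _) (measure_mono (Set.subset_univ _))
      _ = 1 := by simp
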